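/- arXiv:2603.28185 — 2 statements merged into one kernel-verified Lean document; each statement's English description precedes it below -/
import Mathlib

section
/- Let G be any finitely generated group and let F be a finite subset of G consisting of a generating set, the inverses of its elements, and the identity e. Then there exists a random process (a Borel probability measure on sequences (f_{w_n})_{n≥1} with values in F) such that, setting g_0 = e and g_n = f_{w_n}·g_{n−1} for n ≥ 1, one has for every n ≥ 1 and every g ∈ G: P(g_n = g) ≤ 1/#B_{⌊n/4⌋}^G(e). -/
open Filter Set Topology MeasureTheory
open scoped ENNReal

namespace NilpotentCritReg

variable {G : Type*} [Group G]

/-- The ball of radius `n` in `G` with respect to the finite set `S`: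
elements expressible as products of at most `n` elements of `S ∪ S⁻¹`. -/
def wordBall (S : Finset G) (n : ℕ) : Set G :=
  {g | ∃ l : List G, l.length ≤ n ∧ (∀ x ∈ l, x ∈ S ∨ x⁻¹ ∈ S) ∧ l.prod = g}

/-- The ball of radius `n` in the Schreier graph of the left coset space `G/H`:
the image of the word ball in `G ⧸ H`. -/
def schreierBall (S : Finset G) (H : Subgroup G) (n : ℕ) : Set (G ⧸ H) :=
  (fun g => (QuotientGroup.mk g : G ⧸ H)) '' wordBall S n

/-- `gr(G/H) = d`: the growth rate of the Schreier graph `G/H` equals `d`. -/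
def HasSchreierGrowth (S : Finset G) (H : Subgroup G) (d : ℝ) : Prop :=
  Tendsto (fun n : ℕ => Real.log ((schreierBall S H n).ncard) / Real.log n)
    atTop (𝓝 d)

/-- `gr_G(H) = d`: the relative growth of the subgroup `H` in `G` equals `d`. -/
def HasRelativeGrowth (S : Finset G) (H : Subgroup G) (d : ℝ) : Prop :=
  Tendsto (fun n : ℕ => Real.log ((wordBall S n ∩ (H : Set G)).ncard) / Real.log n)
    atTop (𝓝 d)

/-- `K` is a stabilizer subgroup of the central element `c`. -/
def IsStabilizerSubgroup (c : G) (K : Subgroup G) : Prop :=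
  c ∈ K ∧
  (∃ H : Subgroup G, H ≤ K ∧
      (∃ ψ : ↥K →* Multiplicative ℤ, Function.Surjective ψ ∧ ψ.ker = H.subgroupOf K) ∧
      H ⊓ Subgroup.zpowers c = ⊥) ∧
  (∃ n : ℕ, ∃ chain : Fin (n + 1) → Subgroup G,
      chain 0 = ⊤ ∧ chain (Fin.last n) = K ∧
      ∀ i : Fin n, chain i.succ ≤ chain i.castSucc ∧
        ∃ ψ : ↥(chain i.castSucc) →* Multiplicative ℤ, Function.Surjective ψ ∧
          ψ.ker = (chain i.succ).subgroupOf (chain i.castSucc))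

/-- An action of `G` on a subset `M ⊆ ℝ` by orientation-preserving bijections. -/
structure IntervalAction (G : Type*) [Group G] (M : Set ℝ) where
  toFun : G → ℝ → ℝ
  bijOn : ∀ g : G, Set.BijOn (toFun g) M M
  strictMonoOn : ∀ g : G, StrictMonoOn (toFun g) M
  map_one : Set.EqOn (toFun 1) id M
  map_mul : ∀ g h : G, ∀ x ∈ M, toFun (g * h) x = toFun g (toFun h x)

namespace IntervalAction

variable {M : Set ℝ}

/-- The action is by `C¹` diffeomorphisms (continuous positive derivative on `M`). -/
def IsC1 (φ : IntervalAction G M) : Prop :=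
  ∀ g : G, ∃ d : ℝ → ℝ, ContinuousOn d M ∧
    ∀ x ∈ M, 0 < d x ∧ HasDerivWithinAt (φ.toFun g) (d x) M x

/-- The action is by `C^{1+α}` diffeomorphisms: `C¹` with derivative `α`-Hölder on
every compact subset of `M` (for compact `M` this is global `α`-Hölder continuity). -/
def IsC1Holder (φ : IntervalAction G M) (α : ℝ) : Prop :=
  ∀ g : G, ∃ d : ℝ → ℝ, ContinuousOn d M ∧
    (∀ x ∈ M, 0 < d x ∧ HasDerivWithinAt (φ.toFun g) (d x) M x) ∧
    ∀ K : Set ℝ, K ⊆ M → IsCompact K →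
      ∃ C : ℝ, ∀ x ∈ K, ∀ y ∈ K, |d x - d y| ≤ C * |x - y| ^ α

/-- Faithfulness of an interval action. -/
def Faithful (φ : IntervalAction G M) : Prop :=
  ∀ g : G, Set.EqOn (φ.toFun g) id M → g = 1

end IntervalAction

/-- An action of `G` on the circle `S¹ = ℝ/ℤ` by orientation-preserving homeomorphisms,
encoded by lifts to `ℝ` commuting with the unit translation; the group laws hold up to
integer translations. -/
structure CircleAction (G : Type*) [Group G] where
  lift : G → ℝ → ℝ
  strictMono : ∀ g : G, StrictMono (lift g)
  surjective : ∀ g : G, Function.Surjective (lift g)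
  lift_add_one : ∀ (g : G) (x : ℝ), lift g (x + 1) = lift g x + 1
  lift_one : ∃ k : ℤ, ∀ x : ℝ, lift 1 x = x + k
  lift_mul : ∀ g h : G, ∃ k : ℤ, ∀ x : ℝ, lift (g * h) x = lift g (lift h x) + k

namespace CircleAction

/-- `g` acts as the identity on the circle. -/
def IsIdOn (φ : CircleAction G) (g : G) : Prop :=
  ∃ k : ℤ, ∀ x : ℝ, φ.lift g x = x + k

/-- Faithfulness of a circle action. -/
def Faithful (φ : CircleAction G) : Prop :=
  ∀ g : G, φ.IsIdOn g → g = 1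

/-- The circle action is by `C¹` diffeomorphisms. -/
def IsC1 (φ : CircleAction G) : Prop :=
  ∀ g : G, ∃ d : ℝ → ℝ, Continuous d ∧ ∀ x : ℝ, 0 < d x ∧ HasDerivAt (φ.lift g) (d x) x

/-- The circle action is by `C^{1+α}` diffeomorphisms. -/
def IsC1Holder (φ : CircleAction G) (α : ℝ) : Prop :=
  ∀ g : G, ∃ d : ℝ → ℝ, Continuous d ∧ (∀ x : ℝ, 0 < d x ∧ HasDerivAt (φ.lift g) (d x) x) ∧
    ∃ C : ℝ, ∀ x y : ℝ, |d x - d y| ≤ C * |x - y| ^ α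

/-- The set of lifts of fixed points of `g` on the circle. -/
def FixLift (φ : CircleAction G) (g : G) : Set ℝ :=
  {x : ℝ | ∃ k : ℤ, φ.lift g x = x + k}

/-- `J ⊆ ℝ` is (the lift of) a support interval of `g` on the circle: the closure of a
connected component of the complement of the fixed-point set. -/
def IsSupportLift (φ : CircleAction G) (g : G) (J : Set ℝ) : Prop :=
  ∃ x : ℝ, x ∉ φ.FixLift g ∧ J = closure (connectedComponentIn (φ.FixLift g)ᶜ x)

/-- `g` stabilizes the (projection to the circle of the) interval `J`. -/
def Stabilizes (φ : CircleAction G) (g : G) (J : Set ℝ) : Prop :=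
  ∃ k : ℤ, φ.lift g '' J = (fun x => x + (k : ℝ)) '' J

end CircleAction

/-- Critical regularity of a class of interval actions, as an element of `[1,∞]`. -/
noncomputable def critInterval (G : Type*) [Group G] (M : Set ℝ)
    (P : IntervalAction G M → Prop) : ℝ≥0∞ :=
  sSup (insert 1 {x : ℝ≥0∞ | ∃ α : ℝ, 0 < α ∧ α < 1 ∧ x = ENNReal.ofReal (1 + α) ∧
    ∃ φ : IntervalAction G M, P φ ∧ φ.IsC1Holder α})

/-- Critical regularity of a class of circle actions, as an element of `[1,∞]`. -/
noncomputable def critCircle (G : Type*) [Group G]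
    (P : CircleAction G → Prop) : ℝ≥0∞ :=
  sSup (insert 1 {x : ℝ≥0∞ | ∃ α : ℝ, 0 < α ∧ α < 1 ∧ x = ENNReal.ofReal (1 + α) ∧
    ∃ φ : CircleAction G, P φ ∧ φ.IsC1Holder α})

/-- The value `1 + 1/d`, with the convention that it is `+∞` when `d = 0`. -/
noncomputable def critFormula (d : ℕ) : ℝ≥0∞ :=
  if d = 0 then ⊤ else ENNReal.ofReal (1 + 1 / d)

/-- `J` is a support interval of `f` in `M`: the closure (in `M`) of a connected
component of `M ∖ Fix(f)`. -/
def IsSupportIntervalIn (f : ℝ → ℝ) (M J : Set ℝ) : Prop :=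
  ∃ x ∈ M, f x ≠ x ∧ J = M ∩ closure (connectedComponentIn {y ∈ M | f y ≠ y} x)

/-- The left-ordered partial products `g_n = ω_{n-1} ⋯ ω_1 ω_0` of a sequence. -/
def leftProd (ω : ℕ → G) : ℕ → G
  | 0 => 1
  | n + 1 => ω n * leftProd ω n

/-- `S ∪ S⁻¹ ∪ {1}` as a finite set. -/
def symmGens [DecidableEq G] (S : Finset G) : Finset G :=
  insert 1 (S ∪ S.image (·⁻¹))

instance lcs_subgroupOf_normal (G : Type*) [Group G] (j : ℕ) :
    (((⊤ : Subgroup G).lowerCentralSeries (j + 1)).subgroupOf ((⊤ : Subgroup G).lowerCentralSeries j)).Normal :=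
  Subgroup.Normal.subgroupOf inferInstance _

/-- The quotient `G_j/G_{j+1}` of consecutive terms of the lower central series
(with 0-based indexing: `lcsQuot G 0 = G/[G,G]`). -/
abbrev lcsQuot (G : Type*) [Group G] (j : ℕ) :=
  ↥((⊤ : Subgroup G).lowerCentralSeries j) ⧸
    (((⊤ : Subgroup G).lowerCentralSeries (j + 1)).subgroupOf ((⊤ : Subgroup G).lowerCentralSeries j))

/-- A group has torsion-free rank `r` if it admits a finite normal subgroup with
quotient free abelian of rank `r` (for finitely generated abelian groups this is the
usual torsion-free rank). -/
def HasTorsionFreeRank (A : Type*) [Group A] (r : ℕ) : Prop :=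
  ∃ ψ : A →* Multiplicative (Fin r → ℤ), Function.Surjective ψ ∧ Finite ψ.ker

/-- The image of `H_j = H ∩ G_j` in the quotient `G_j/G_{j+1}`. -/
def relImage (H : Subgroup G) (j : ℕ) : Subgroup (lcsQuot G j) :=
  Subgroup.map (QuotientGroup.mk' _)
    ((H ⊓ (⊤ : Subgroup G).lowerCentralSeries j).subgroupOf ((⊤ : Subgroup G).lowerCentralSeries j))

/-- The word norm of an element with respect to a finite generating set. -/
noncomputable def wordNorm {A : Type*} [Group A] (T : Finset A) (a : A) : ℕ :=
  sInf {n : ℕ | a ∈ wordBall T n}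



/-! ### Auxiliary material for `random_process_exists` -/

section RandomProcessAux

open MeasureTheory Set Function

/-! #### Instances -/

instance (n : ℕ) : ContinuousAdd (ZMod n) := ⟨continuous_of_discreteTopology⟩
instance (n : ℕ) : ContinuousNeg (ZMod n) := ⟨continuous_of_discreteTopology⟩
instance (n : ℕ) : IsTopologicalAddGroup (ZMod n) := {}
instance (n : ℕ) : BorelSpace (ZMod n) := ⟨borel_eq_top_of_discrete.symm⟩

instance piMeasurableSingletonClass {ι : Type*} [Countable ι] {f : ι → Type*}
    [∀ i, MeasurableSpace (f i)] [∀ i, MeasurableSingletonClass (f i)] :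
    MeasurableSingletonClass (Π i, f i) := by
  constructor
  intro v
  have hv : ({v} : Set (Π i, f i)) = ⋂ i, (fun h : Π i, f i => h i) ⁻¹' {v i} := by
    ext h; simp [funext_iff]
  rw [hv]
  exact MeasurableSet.iInter fun i => (measurable_pi_apply i) (measurableSet_singleton _)

/-! #### The invariance principle for Haar measure on a product of `ZMod`s -/

section KeyMeasure

variable (N : ℕ → ℕ) [hN : ∀ j, NeZero (N j)]

/-- The whole space as a positive compact set. -/
noncomputable def univCompacts : TopologicalSpace.PositiveCompacts (Π j, ZMod (N j)) :=
  ⟨⟨univ, isCompact_univ⟩, by simp⟩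

/-- The normalized Haar probability measure on the compact group `Π j, ZMod (N j)`. -/
noncomputable def haarOm : Measure (Π j, ZMod (N j)) :=
  Measure.addHaarMeasure (univCompacts N)

instance haarOm_prob : IsProbabilityMeasure (haarOm N) := by
  constructor
  have h := Measure.addHaarMeasure_self (K₀ := univCompacts N)
  simpa [univCompacts, haarOm] using h

theorem key_bound (j : ℕ) (ψ : (Π i, ZMod (N i)) → ZMod (N j)) (hψm : Measurable ψ)
    (hψ : ∀ (h : Π i, ZMod (N i)) (t : ZMod (N j)),
      ψ (h + Pi.single (M := fun i => ZMod (N i)) j t) = ψ h) :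
    haarOm N {h | h j = ψ h} = ((N j : ℝ≥0∞))⁻¹ := by
  set μ := haarOm N with hμ
  haveI : μ.IsAddLeftInvariant := by rw [hμ]; unfold haarOm; infer_instance
  set A : ZMod (N j) → Set (Π i, ZMod (N i)) := fun t => {h | h j + t = ψ h} with hA
  have measA : ∀ t, MeasurableSet (A t) := by
    intro t
    have hAt : A t = ⋃ v : ZMod (N j),
        ((fun h : Π i, ZMod (N i) => h j) ⁻¹' {v - t}) ∩ (ψ ⁻¹' {v}) := by
      ext h
      simp only [hA, mem_setOf_eq, mem_iUnion, mem_inter_iff, mem_preimage,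
        mem_singleton_iff]
      constructor
      · intro he; exact ⟨ψ h, eq_sub_of_add_eq he, rfl⟩
      · rintro ⟨v, h1, h2⟩; rw [h1, h2]; abel
    rw [hAt]
    exact MeasurableSet.iUnion fun v =>
      ((measurable_pi_apply j) MeasurableSpace.measurableSet_top).inter
        (hψm MeasurableSpace.measurableSet_top)
  have hdisj : Pairwise (Function.onFun Disjoint A) := by
    intro t t' htt'
    refine Set.disjoint_left.2 fun h ht ht' => htt' ?_
    have h1 : h j + t = ψ h := ht
    have h2 : h j + t' = ψ h := ht'
    exact add_left_cancel (h1.trans h2.symm)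
  have hcover : (⋃ t, A t) = univ := by
    refine eq_univ_of_forall fun h => mem_iUnion.2 ⟨ψ h - h j, ?_⟩
    show h j + (ψ h - h j) = ψ h
    abel
  have htrans : ∀ t, μ (A t) = μ (A 0) := by
    intro t
    have hpre : A t = (fun h => Pi.single (M := fun i => ZMod (N i)) j t + h) ⁻¹' (A 0) := by
      ext h
      have h1 : (Pi.single (M := fun i => ZMod (N i)) j t + h) j = h j + t := by
        simp [add_comm]
      have h2 : ψ (Pi.single (M := fun i => ZMod (N i)) j t + h) = ψ h := by
        rw [add_comm]; exact hψ h t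
      simp only [Set.mem_preimage, hA, Set.mem_setOf_eq, h1, h2, add_zero]
    rw [hpre, measure_preimage_add]
  have hsum : ∑' t : ZMod (N j), μ (A t) = 1 := by
    rw [← measure_iUnion hdisj measA, hcover]
    exact measure_univ
  have hcard : (Fintype.card (ZMod (N j)) : ℝ≥0∞) * μ (A 0) = 1 := by
    rw [← hsum]
    rw [tsum_fintype]
    simp only [htrans]
    rw [Finset.sum_const, Finset.card_univ, nsmul_eq_mul]
  rw [ZMod.card] at hcard
  have hN0 : ((N j : ℝ≥0∞)) ≠ 0 := by
    exact_mod_cast Nat.cast_ne_zero.2 (NeZero.ne (N j))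
  have hNt : ((N j : ℝ≥0∞)) ≠ ⊤ := ENNReal.natCast_ne_top _
  have hfin : μ (A 0) = (N j : ℝ≥0∞)⁻¹ := by
    have := congrArg (fun x => (N j : ℝ≥0∞)⁻¹ * x) hcard
    simpa [← mul_assoc, ENNReal.inv_mul_cancel hN0 hNt] using this
  have hA0 : A 0 = {h | h j = ψ h} := by
    ext h; simp [hA]
  rw [← hA0]; exact hfin

end KeyMeasure

/-! #### Word-ball lemmas -/

variable {G : Type*} [Group G]

lemma one_mem_wordBall (S : Finset G) (n : ℕ) : (1 : G) ∈ wordBall S n :=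
  ⟨[], by simp, by simp, by simp⟩

lemma wordBall_mono (S : Finset G) {m n : ℕ} (h : m ≤ n) : wordBall S m ⊆ wordBall S n := by
  rintro g ⟨l, hl, hmem, rfl⟩; exact ⟨l, hl.trans h, hmem, rfl⟩

lemma wordBall_finite (S : Finset G) (n : ℕ) : (wordBall S n).Finite := by
  classical
  set T : Set G := ↑S ∪ (fun x : G => x⁻¹) '' ↑S with hT
  have hTfin : T.Finite := S.finite_toSet.union (S.finite_toSet.image _)
  haveI := hTfin.to_subtype
  have hsub : wordBall S n ⊆
      (fun l : List T => (l.map Subtype.val).prod) '' {l | l.length ≤ n} := by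
    rintro g ⟨l, hlen, hmem, rfl⟩
    have hmem' : ∀ x ∈ l, x ∈ T := by
      intro x hx
      rcases hmem x hx with h | h
      · exact Or.inl h
      · exact Or.inr ⟨x⁻¹, h, inv_inv x⟩
    refine ⟨l.attach.map fun x => ⟨x.1, hmem' x.1 x.2⟩, ?_, ?_⟩
    · simpa using hlen
    · show ((l.attach.map fun x => (⟨x.1, hmem' x.1 x.2⟩ : T)).map Subtype.val).prod = l.prod
      rw [List.map_map]
      simp [Function.comp_def]
  exact ((List.finite_length_le T n).image _).subset hsub

lemma wordBall_zero (S : Finset G) : wordBall S 0 = {1} := by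
  ext g
  constructor
  · rintro ⟨l, hl, -, rfl⟩
    rw [List.length_eq_zero_iff.1 (Nat.le_zero.1 hl)]
    simp
  · rintro rfl
    exact one_mem_wordBall S 0

lemma wordBall_ncard_pos (S : Finset G) (n : ℕ) : 0 < (wordBall S n).ncard :=
  ((Set.ncard_pos (wordBall_finite S n)).2 ⟨1, one_mem_wordBall S n⟩)

/-! #### Spelled-out block words -/

/-- A word of length exactly `m` (over `S ∪ S⁻¹ ∪ {1}`) whose reversed product is `g`,
provided `g ∈ wordBall S m`. -/
noncomputable def blockWord (S : Finset G) (m : ℕ) (g : G) : List G := by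
  classical
  exact if h : g ∈ wordBall S m then
    ((List.replicate (m - h.choose.length) (1 : G)) ++ h.choose).reverse
  else List.replicate m (1 : G)

lemma blockWord_length (S : Finset G) (m : ℕ) (g : G) : (blockWord S m g).length = m := by
  unfold blockWord
  split
  next h =>
    have h1 := h.choose_spec.1
    simp only [List.length_reverse, List.length_append, List.length_replicate]
    omega
  next h => simp

lemma blockWord_mem [DecidableEq G] (S : Finset G) (m : ℕ) (g : G) :
    ∀ x ∈ blockWord S m g, x ∈ symmGens S := by
  intro x hx
  unfold blockWord at hx
  split at hx
  next h =>
    rw [List.mem_reverse, List.mem_append] at hx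
    rcases hx with hx | hx
    · rw [List.eq_of_mem_replicate hx]
      exact Finset.mem_insert_self _ _
    · rcases h.choose_spec.2.1 x hx with h' | h'
      · exact Finset.mem_insert_of_mem (Finset.mem_union_left _ h')
      · exact Finset.mem_insert_of_mem (Finset.mem_union_right _
          (Finset.mem_image.2 ⟨x⁻¹, h', inv_inv x⟩))
  next h =>
    rw [List.eq_of_mem_replicate hx]
    exact Finset.mem_insert_self _ _

lemma blockWord_prod (S : Finset G) (m : ℕ) (g : G) (hg : g ∈ wordBall S m) :
    (blockWord S m g).reverse.prod = g := by
  unfold blockWord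
  rw [dif_pos hg, List.reverse_reverse, List.prod_append, List.prod_replicate, one_pow,
    one_mul]
  exact hg.choose_spec.2.2

/-! #### `leftProd` lemmas -/

lemma leftProd_add (ω : ℕ → G) (a b : ℕ) :
    leftProd ω (a + b) = leftProd (fun i => ω (a + i)) b * leftProd ω a := by
  induction b with
  | zero => simp [leftProd]
  | succ b ih =>
    have : a + (b + 1) = (a + b) + 1 := by omega
    rw [this]
    show ω (a + b) * leftProd ω (a + b) = (ω (a + b) * leftProd (fun i => ω (a + i)) b)
      * leftProd ω a
    rw [ih, mul_assoc]

lemma leftProd_congr {ω ω' : ℕ → G} : ∀ {n : ℕ}, (∀ i < n, ω i = ω' i) →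
    leftProd ω n = leftProd ω' n := by
  intro n
  induction n with
  | zero => intro _; rfl
  | succ n ih =>
    intro h
    show ω n * leftProd ω n = ω' n * leftProd ω' n
    rw [h n (by omega), ih fun i hi => h i (by omega)]

lemma leftProd_list (l : List G) : ∀ s : ℕ, s ≤ l.length →
    leftProd (fun i => l.getD i 1) s = (l.take s).reverse.prod := by
  intro s
  induction s with
  | zero => intro _; simp [leftProd]
  | succ s ih =>
    intro hs
    have hlt : s < l.length := hs
    show l.getD s 1 * leftProd (fun i => l.getD i 1) s = _
    rw [ih hlt.le, List.getD_eq_getElem _ _ hlt, ← List.take_concat_get' l s hlt,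
      List.reverse_append]
    simp

/-! #### Block schedule arithmetic -/

/-- Start time of block `j`. -/
def tstart (j : ℕ) : ℕ := 2 ^ (j + 2) - 4

/-- The block containing time `n`. -/
def blk (n : ℕ) : ℕ := Nat.log 2 (n + 4) - 2

lemma four_le_pow (j : ℕ) : (4 : ℕ) ≤ 2 ^ (j + 2) := by
  calc (4 : ℕ) = 2 ^ 2 := by norm_num
  _ ≤ 2 ^ (j + 2) := Nat.pow_le_pow_right (by norm_num) (by omega)

lemma tstart_succ (j : ℕ) : tstart (j + 1) = tstart j + 2 ^ (j + 2) := by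
  have h4 := four_le_pow j
  have hp : (2 : ℕ) ^ (j + 1 + 2) = 2 ^ (j + 2) * 2 := by rw [← pow_succ]
  unfold tstart
  omega

lemma blk_eq (j i : ℕ) (hi : i < 2 ^ (j + 2)) : blk (tstart j + i) = j := by
  have h4 := four_le_pow j
  have h1 : tstart j + i + 4 = 2 ^ (j + 2) + i := by unfold tstart; omega
  have h2 : (2 : ℕ) ^ (j + 2 + 1) = 2 ^ (j + 2) * 2 := by rw [← pow_succ]
  have hlog : Nat.log 2 (tstart j + i + 4) = j + 2 :=
    Nat.log_eq_of_pow_le_of_lt_pow (by omega) (by omega)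
  unfold blk
  omega

lemma blk_spec (n : ℕ) : tstart (blk n) ≤ n ∧ n < tstart (blk n) + 2 ^ (blk n + 2) := by
  set k := Nat.log 2 (n + 4) with hk
  have hk2 : 2 ≤ k := by
    have h4 : (2 : ℕ) ^ 2 ≤ n + 4 := by norm_num
    exact (Nat.le_log_iff_pow_le (by norm_num) (by omega)).2 h4
  have h1 : 2 ^ k ≤ n + 4 := Nat.pow_log_le_self 2 (by omega)
  have h2 : n + 4 < 2 ^ (k + 1) := Nat.lt_pow_succ_log_self (by norm_num) _
  have hblk : blk n = k - 2 := rfl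
  have hke : blk n + 2 = k := by omega
  have hp : (2 : ℕ) ^ (k + 1) = 2 ^ k * 2 := by rw [← pow_succ]
  constructor
  · show tstart (blk n) ≤ n
    unfold tstart
    rw [hke]
    omega
  · show n < tstart (blk n) + 2 ^ (blk n + 2)
    unfold tstart
    rw [hke]
    omega

/-! #### The process -/

variable [DecidableEq G]

/-- Sizes of the word balls used for the blocks. -/
noncomputable def NNS (S : Finset G) (j : ℕ) : ℕ := (wordBall S (2 ^ (j + 2))).ncard

instance (S : Finset G) (j : ℕ) : NeZero (NNS S j) := ⟨(wordBall_ncard_pos S _).ne'⟩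

/-- An injective enumeration of the ball of radius `2 ^ (j + 2)`. -/
noncomputable def encS (S : Finset G) (j : ℕ) (z : ZMod (NNS S j)) : G :=
  if h : z.val < ((wordBall_finite S (2 ^ (j + 2))).toFinset).card then
    ((wordBall_finite S (2 ^ (j + 2))).toFinset.equivFin.symm ⟨z.val, h⟩ : G)
  else 1

lemma card_ball_toFinset (S : Finset G) (j : ℕ) :
    ((wordBall_finite S (2 ^ (j + 2))).toFinset).card = NNS S j :=
  (Set.ncard_eq_toFinset_card _ (wordBall_finite S (2 ^ (j + 2)))).symm

lemma encS_val_lt (S : Finset G) (j : ℕ) (z : ZMod (NNS S j)) :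
    z.val < ((wordBall_finite S (2 ^ (j + 2))).toFinset).card := by
  rw [card_ball_toFinset]
  exact ZMod.val_lt z

lemma encS_mem (S : Finset G) (j : ℕ) (z : ZMod (NNS S j)) :
    encS S j z ∈ wordBall S (2 ^ (j + 2)) := by
  unfold encS
  rw [dif_pos (encS_val_lt S j z)]
  exact (Set.Finite.mem_toFinset _).1
    ((wordBall_finite S (2 ^ (j + 2))).toFinset.equivFin.symm ⟨z.val, _⟩).2

lemma encS_inj (S : Finset G) (j : ℕ) : Function.Injective (encS S j) := by
  intro a b hab
  unfold encS at hab
  rw [dif_pos (encS_val_lt S j a), dif_pos (encS_val_lt S j b)] at hab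
  have h1 := Subtype.coe_injective hab
  have h2 := (Equiv.injective _) h1
  have h3 : a.val = b.val := congrArg Fin.val h2
  exact ZMod.val_injective _ h3

/-- The letters of the process, as a function of the block seeds. -/
noncomputable def lettersS (S : Finset G) (h : Π j, ZMod (NNS S j)) (n : ℕ) : G :=
  (blockWord S (2 ^ (blk n + 2)) (encS S (blk n) (h (blk n)))).getD (n - tstart (blk n)) 1

lemma lettersS_mem (S : Finset G) (h : Π j, ZMod (NNS S j)) (n : ℕ) :
    lettersS S h n ∈ symmGens S := by
  unfold lettersS
  set l := blockWord S (2 ^ (blk n + 2)) (encS S (blk n) (h (blk n))) with hl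
  by_cases hlt : n - tstart (blk n) < l.length
  · rw [List.getD_eq_getElem _ _ hlt]
    exact blockWord_mem S _ _ _ (List.getElem_mem hlt)
  · rw [List.getD_eq_default _ _ (by omega)]
    exact Finset.mem_insert_self _ _

/-- The cumulative block products. -/
noncomputable def QprodS (S : Finset G) (h : Π j, ZMod (NNS S j)) : ℕ → G
  | 0 => 1
  | j + 1 => encS S j (h j) * QprodS S h j

lemma QprodS_congr (S : Finset G) {h h' : Π j, ZMod (NNS S j)} (j : ℕ)
    (he : ∀ i < j, h i = h' i) : QprodS S h j = QprodS S h' j := by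
  induction j with
  | zero => rfl
  | succ j ih =>
    show encS S j (h j) * QprodS S h j = encS S j (h' j) * QprodS S h' j
    rw [he j (by omega), ih fun i hi => he i (by omega)]

/-- Prefix products within a block. -/
noncomputable def partialP (S : Finset G) (j s : ℕ) (z : ZMod (NNS S j)) : G :=
  ((blockWord S (2 ^ (j + 2)) (encS S j z)).take s).reverse.prod

lemma block_formula (S : Finset G) (h : Π j, ZMod (NNS S j)) (j s : ℕ)
    (hs : s ≤ 2 ^ (j + 2)) :
    leftProd (lettersS S h) (tstart j + s)
      = partialP S j s (h j) * leftProd (lettersS S h) (tstart j) := by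
  rw [leftProd_add]
  congr 1
  have hcongr : ∀ i < s, lettersS S h (tstart j + i)
      = (blockWord S (2 ^ (j + 2)) (encS S j (h j))).getD i 1 := by
    intro i hi
    unfold lettersS
    rw [blk_eq j i (lt_of_lt_of_le hi hs), Nat.add_sub_cancel_left]
  rw [leftProd_congr hcongr]
  exact leftProd_list _ s (by rw [blockWord_length]; exact hs)

lemma tstart_formula (S : Finset G) (h : Π j, ZMod (NNS S j)) :
    ∀ j, leftProd (lettersS S h) (tstart j) = QprodS S h j := by
  intro j
  induction j with
  | zero =>
    have : tstart 0 = 0 := by unfold tstart; norm_num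
    rw [this]
    rfl
  | succ j ih =>
    rw [tstart_succ, block_formula S h j _ le_rfl, ih]
    show partialP S j (2 ^ (j + 2)) (h j) * QprodS S h j = QprodS S h (j + 1)
    have htake : (blockWord S (2 ^ (j + 2)) (encS S j (h j))).take (2 ^ (j + 2))
        = blockWord S (2 ^ (j + 2)) (encS S j (h j)) :=
      List.take_of_length_le (by rw [blockWord_length])
    unfold partialP
    rw [htake, blockWord_prod _ _ _ (encS_mem S j (h j))]
    rfl

/-- Countability of a finitely generated group. -/
lemma countable_of_gen (S : Finset G) (hS : Subgroup.closure (S : Set G) = ⊤) :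
    Countable G := by
  classical
  set T : Set G := ↑S ∪ (↑S : Set G)⁻¹ with hT
  haveI : Countable T := (S.finite_toSet.union (S.finite_toSet.inv)).countable.to_subtype
  have hsurj : Function.Surjective (fun l : List T => (l.map Subtype.val).prod) := by
    intro g
    have hg : g ∈ Submonoid.closure T := by
      rw [hT, ← Subgroup.closure_toSubmonoid, hS]
      trivial
    obtain ⟨l, hl, hprod⟩ := Submonoid.exists_list_of_mem_closure hg
    refine ⟨l.attach.map fun x => ⟨x.1, hl x.1 x.2⟩, ?_⟩
    show ((l.attach.map fun x => (⟨x.1, hl x.1 x.2⟩ : T)).map Subtype.val).prod = g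
    rw [List.map_map]
    simpa [Function.comp_def] using hprod
  exact hsurj.countable

end RandomProcessAux

/-- **Existence of the spreading random process.** For any finitely generated group `G`
with symmetrized generating set `F = S ∪ S⁻¹ ∪ {1}`, there is a probability measure on
sequences with values in `F` such that the left partial products `g_n` satisfy
`P(g_n = g) ≤ 1/#B_{⌊n/4⌋}(e)` for all `n ≥ 1` and `g ∈ G`. -/
theorem random_process_exists
    {G : Type*} [Group G] [DecidableEq G] [mG : MeasurableSpace G] (hmG : mG = ⊤)
    (S : Finset G) (hS : Subgroup.closure (S : Set G) = ⊤)
    (F : Finset G) (hF : F = symmGens S) :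
    ∃ μ : Measure (ℕ → G), IsProbabilityMeasure μ ∧
      μ {ω : ℕ → G | ∀ n : ℕ, ω n ∈ (F : Set G)} = 1 ∧
      ∀ n : ℕ, 1 ≤ n → ∀ g : G,
        μ {ω : ℕ → G | leftProd ω n = g} ≤ (((wordBall S (n / 4)).ncard : ℝ≥0∞))⁻¹ := by
  classical
  subst hF
  have hGmeas : ∀ s : Set G, MeasurableSet s := fun s => by
    rw [hmG]; exact MeasurableSpace.measurableSet_top
  haveI : Countable G := countable_of_gen S hS
  have hΦ : Measurable (fun h : Π j, ZMod (NNS S j) => lettersS S h) := by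
    apply measurable_pi_lambda
    intro n
    exact Measurable.comp
      (measurable_from_top (f := fun z : ZMod (NNS S (blk n)) =>
        (blockWord S (2 ^ (blk n + 2)) (encS S (blk n) z)).getD (n - tstart (blk n)) 1))
      (measurable_pi_apply (blk n))
  haveI : IsProbabilityMeasure (haarOm (NNS S)) := haarOm_prob (NNS S)
  haveI hP : IsProbabilityMeasure
      ((haarOm (NNS S)).map (fun h : Π j, ZMod (NNS S j) => lettersS S h)) :=
    Measure.isProbabilityMeasure_map hΦ.aemeasurable
  refine ⟨(haarOm (NNS S)).map (fun h : Π j, ZMod (NNS S j) => lettersS S h), hP, ?_, ?_⟩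
  · -- the process takes values in `F`
    have hEm : MeasurableSet {ω : ℕ → G | ∀ n, ω n ∈ (↑(symmGens S) : Set G)} := by
      have hE : {ω : ℕ → G | ∀ n, ω n ∈ (↑(symmGens S) : Set G)}
          = ⋂ n, (fun ω : ℕ → G => ω n) ⁻¹' ↑(symmGens S) := by ext ω; simp
      rw [hE]
      exact MeasurableSet.iInter fun n =>
        (measurable_pi_apply n) (hGmeas _)
    rw [Measure.map_apply hΦ hEm]
    have hpreuniv : (fun h : Π j, ZMod (NNS S j) => lettersS S h) ⁻¹'
        {ω : ℕ → G | ∀ n, ω n ∈ (↑(symmGens S) : Set G)} = Set.univ :=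
      Set.eq_univ_of_forall fun h n => lettersS_mem S h n
    rw [hpreuniv]
    exact measure_univ
  · -- the spreading bound
    have hmeasev : ∀ (m : ℕ) (g : G), MeasurableSet {ω : ℕ → G | leftProd ω m = g} := by
      intro m
      induction m with
      | zero =>
        intro g
        by_cases h1 : (1 : G) = g
        · have he : {ω : ℕ → G | leftProd ω 0 = g} = Set.univ :=
            Set.eq_univ_of_forall fun ω => h1
          rw [he]; exact MeasurableSet.univ
        · have he : {ω : ℕ → G | leftProd ω 0 = g} = ∅ :=
            Set.eq_empty_iff_forall_notMem.2 fun ω hω => h1 hω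
          rw [he]; exact MeasurableSet.empty
      | succ m ih =>
        intro g
        have he : {ω : ℕ → G | leftProd ω (m + 1) = g}
            = ⋃ x : G, ((fun ω : ℕ → G => ω m) ⁻¹' {x}) ∩ {ω | leftProd ω m = x⁻¹ * g} := by
          ext ω
          simp only [Set.mem_setOf_eq, Set.mem_iUnion, Set.mem_inter_iff, Set.mem_preimage,
            Set.mem_singleton_iff]
          constructor
          · intro hω
            refine ⟨ω m, rfl, ?_⟩
            have hstep : leftProd ω (m + 1) = ω m * leftProd ω m := rfl
            rw [hstep] at hω
            rw [← hω]
            group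
          · rintro ⟨x, hx, hω⟩
            show ω m * leftProd ω m = g
            rw [hx, hω]
            group
        rw [he]
        exact MeasurableSet.iUnion fun x =>
          ((measurable_pi_apply m) (hGmeas _)).inter (ih _)
    intro n hn g
    rw [Measure.map_apply hΦ (hmeasev n g)]
    obtain ⟨h1, h2⟩ := blk_spec n
    obtain ⟨s, hns⟩ := Nat.exists_eq_add_of_le h1
    have hslt : s < 2 ^ (blk n + 2) := by omega
    cases hk : blk n with
    | zero =>
      have hlt4 : n < 4 := by
        rw [hk] at h2
        norm_num [tstart] at h2
        omega
      have hn4 : n / 4 = 0 := by omega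
      rw [hn4, wordBall_zero, Set.ncard_singleton]
      simp only [Nat.cast_one, inv_one]
      exact prob_le_one
    | succ k' =>
      rw [hk] at hns hslt
      set c : (Π j, ZMod (NNS S j)) → G := fun h =>
        (partialP S (k' + 1) s (h (k' + 1)))⁻¹ * g * (QprodS S h k')⁻¹ with hc
      set ψ : (Π j, ZMod (NNS S j)) → ZMod (NNS S k') := fun h =>
        Function.invFun (encS S k') (c h) with hψdef
      have harg : ∀ h : Π j, ZMod (NNS S j), QprodS S h k'
          = QprodS S (fun j : ℕ =>
              if hj : j < k' then ((fun i : Fin k' => h i) ⟨j, hj⟩) else 0) k' :=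
        fun h => QprodS_congr S k' fun i hi => by simp [hi]
      have hψm : Measurable ψ := by
        have hfac : ψ = (fun p : ZMod (NNS S (k' + 1)) × (Π i : Fin k', ZMod (NNS S i)) =>
            Function.invFun (encS S k')
              ((partialP S (k' + 1) s p.1)⁻¹ * g *
                (QprodS S (fun j : ℕ =>
                  if hj : j < k' then (p.2 ⟨j, hj⟩) else 0) k')⁻¹))
            ∘ (fun h : Π j, ZMod (NNS S j) => (h (k' + 1), fun i : Fin k' => h i)) := by
          funext h
          simp only [hψdef, hc, Function.comp_apply]
          rw [← harg h]
        rw [hfac]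
        exact (measurable_of_countable _).comp
          ((measurable_pi_apply (k' + 1)).prodMk
            (measurable_pi_lambda _ fun i => measurable_pi_apply (i : ℕ)))
      have hψinv : ∀ (h : Π j, ZMod (NNS S j)) (t : ZMod (NNS S k')),
          ψ (h + Pi.single (M := fun i => ZMod (NNS S i)) k' t) = ψ h := by
        intro h t
        have e1 : (h + Pi.single (M := fun i => ZMod (NNS S i)) k' t) (k' + 1) = h (k' + 1) := by
          have hne : (Pi.single (M := fun i => ZMod (NNS S i)) k' t) (k' + 1) = 0 :=
            Pi.single_eq_of_ne (M := fun i => ZMod (NNS S i)) (by omega) t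
          simp [hne]
        have e2 : QprodS S (h + Pi.single (M := fun i => ZMod (NNS S i)) k' t) k'
            = QprodS S h k' :=
          QprodS_congr S k' fun i hi => by
            have hne : (Pi.single (M := fun i => ZMod (NNS S i)) k' t) i = 0 :=
              Pi.single_eq_of_ne (M := fun i => ZMod (NNS S i)) (by omega) t
            simp [hne]
        simp only [hψdef, hc, e1, e2]
      have hsub : (fun h : Π j, ZMod (NNS S j) => lettersS S h) ⁻¹'
          {ω : ℕ → G | leftProd ω n = g} ⊆ {h : Π j, ZMod (NNS S j) | h k' = ψ h} := by
        intro h hh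
        have hh' : leftProd (lettersS S h) n = g := hh
        rw [hns, block_formula S h (k' + 1) s hslt.le, tstart_formula] at hh'
        have hq : QprodS S h (k' + 1) = encS S k' (h k') * QprodS S h k' := rfl
        rw [hq] at hh'
        have henc : encS S k' (h k') = c h := by
          rw [hc]
          simp only
          rw [← hh']
          group
        show h k' = ψ h
        simp only [hψdef]
        rw [← henc, Function.leftInverse_invFun (encS_inj S k') (h k')]
      calc (haarOm (NNS S)) ((fun h : Π j, ZMod (NNS S j) => lettersS S h) ⁻¹'
              {ω : ℕ → G | leftProd ω n = g})
          ≤ (haarOm (NNS S)) {h : Π j, ZMod (NNS S j) | h k' = ψ h} := measure_mono hsub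
        _ = ((NNS S k' : ℝ≥0∞))⁻¹ := key_bound (NNS S) k' ψ hψm hψinv
        _ ≤ (((wordBall S (n / 4)).ncard : ℝ≥0∞))⁻¹ := by
            apply ENNReal.inv_le_inv.2
            have hts : tstart (k' + 1) = 2 ^ (k' + 1 + 2) - 4 := rfl
            have hp1 : (2 : ℕ) ^ (k' + 1 + 2) = 2 ^ (k' + 2) * 2 := by rw [← pow_succ]
            have h4 := four_le_pow k'
            have hdiv : n / 4 ≤ 2 ^ (k' + 2) := by omega
            exact_mod_cast Nat.cast_le.2
              (Set.ncard_le_ncard (wordBall_mono S hdiv) (wordBall_finite S _))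

end NilpotentCritReg
end

section
/- (Polterovich–Sodin.) Let J = [a,b] be a nondegenerate compact interval and let g : J → J be an orientation-preserving C¹ diffeomorphism with g ≠ id. Then the sup-norm of the derivative of the iterates of g cannot grow sublinearly: it is not the case that sup_{x∈J} (g^m)'(x) = o(m) as m → ∞; equivalently, limsup_{m→∞} (1/m)·sup_{x∈J} (g^m)'(x) > 0. -/
open Filter Set Topology MeasureTheory
open scoped ENNReal

namespace NilpotentCritReg

variable {G : Type*} [Group G]

private lemma iter_deriv_aux (a b : ℝ) (g : ℝ → ℝ)
    (hmaps : Set.MapsTo g (Set.Icc a b) (Set.Icc a b))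
    (d : ℝ → ℝ) (hd : ContinuousOn d (Set.Icc a b))
    (hC1 : ∀ x ∈ Set.Icc a b, HasDerivWithinAt g (d x) (Set.Icc a b) x) (N : ℕ) :
    ∃ D : ℝ → ℝ, ContinuousOn D (Set.Icc a b) ∧
      ∀ x ∈ Set.Icc a b, HasDerivWithinAt (g^[N]) (D x) (Set.Icc a b) x := by
  induction N with
  | zero =>
    exact ⟨fun _ => 1, continuousOn_const, fun x hx => by
      simpa using (hasDerivWithinAt_id x (Set.Icc a b))⟩
  | succ N ih =>
    obtain ⟨D, hDc, hD⟩ := ih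
    have hiterc : ContinuousOn (g^[N]) (Set.Icc a b) :=
      fun x hx => (hD x hx).continuousWithinAt
    have hmapsN : Set.MapsTo (g^[N]) (Set.Icc a b) (Set.Icc a b) := hmaps.iterate N
    refine ⟨fun x => d (g^[N] x) * D x,
      (hd.comp hiterc hmapsN).mul hDc, fun x hx => ?_⟩
    rw [Function.iterate_succ']
    exact (hC1 _ (hmapsN hx)).comp x (hD x hx) hmapsN

private lemma sup_deriv_ge (a b : ℝ) (hab : a < b) (g : ℝ → ℝ) (N : ℕ)
    (D : ℝ → ℝ) (hDc : ContinuousOn D (Set.Icc a b))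
    (hD : ∀ x ∈ Set.Icc a b, HasDerivWithinAt (g^[N]) (D x) (Set.Icc a b) x)
    (u v : ℝ) (hu : u ∈ Set.Icc a b) (hv : v ∈ Set.Icc a b) (huv : u < v) :
    (g^[N] v - g^[N] u) / (v - u) ≤
      sSup ((fun x => derivWithin (g^[N]) (Set.Icc a b) x) '' Set.Icc a b) := by
  have hUD : UniqueDiffOn ℝ (Set.Icc a b) := uniqueDiffOn_Icc hab
  have hEq : ∀ x ∈ Set.Icc a b, derivWithin (g^[N]) (Set.Icc a b) x = D x :=
    fun x hx => (hD x hx).derivWithin (hUD x hx)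
  have himg : (fun x => derivWithin (g^[N]) (Set.Icc a b) x) '' Set.Icc a b
      = D '' Set.Icc a b := Set.image_congr hEq
  have hbdd : BddAbove ((fun x => derivWithin (g^[N]) (Set.Icc a b) x) '' Set.Icc a b) := by
    rw [himg]; exact (isCompact_Icc.image_of_continuousOn hDc).bddAbove
  have hcont0 : ContinuousOn (g^[N]) (Set.Icc a b) :=
    fun x hx => (hD x hx).continuousWithinAt
  have hcont : ContinuousOn (g^[N]) (Set.Icc u v) :=
    hcont0.mono (Set.Icc_subset_Icc hu.1 hv.2)
  have hderiv : ∀ x ∈ Set.Ioo u v, HasDerivAt (g^[N]) (D x) x := by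
    intro x hx
    have hxab : x ∈ Set.Ioo a b := ⟨lt_of_le_of_lt hu.1 hx.1, lt_of_lt_of_le hx.2 hv.2⟩
    exact (hD x (Set.Ioo_subset_Icc_self hxab)).hasDerivAt (Icc_mem_nhds hxab.1 hxab.2)
  obtain ⟨ξ, hξ, hξeq⟩ := exists_hasDerivAt_eq_slope (g^[N]) D huv hcont hderiv
  have hξab : ξ ∈ Set.Icc a b :=
    ⟨le_trans hu.1 (le_of_lt hξ.1), le_trans (le_of_lt hξ.2) hv.2⟩
  calc (g^[N] v - g^[N] u) / (v - u) = derivWithin (g^[N]) (Set.Icc a b) ξ := by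
        rw [hEq ξ hξab, hξeq]
    _ ≤ _ := le_csSup hbdd (Set.mem_image_of_mem _ hξab)

private lemma no_sublinear (L δ : ℝ) (hδ : 0 < δ) (F : ℕ → ℝ) (s : ℕ → ℝ)
    (hs : ∀ j, 0 < s j) (hsum : ∀ M, ∑ j ∈ Finset.range M, s j ≤ L)
    (hkey : ∀ N, δ / s N ≤ F (N + 1)) :
    ¬ Tendsto (fun m : ℕ => F m / m) atTop (𝓝 0) := by
  intro hT
  obtain ⟨M0, hM0⟩ := Filter.eventually_atTop.mp (hT.eventually_lt_const one_pos)
  -- for j ≥ M0 : s j > δ / (j+1)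
  have hlow : ∀ j, M0 ≤ j → δ / (j + 1 : ℝ) < s j := by
    intro j hj
    have h1 : F (j + 1) / ((j + 1 : ℕ) : ℝ) < 1 := hM0 (j + 1) (le_trans hj (Nat.le_succ j))
    have hj1 : (0 : ℝ) < (j + 1 : ℝ) := by positivity
    have h2 : F (j + 1) < (j + 1 : ℝ) := by
      rw [div_lt_one (by push_cast; linarith)] at h1
      push_cast at h1; linarith
    have h3 : δ / s j < (j + 1 : ℝ) := lt_of_le_of_lt (hkey j) h2
    rw [div_lt_iff₀ (hs j)] at h3
    rw [div_lt_iff₀ hj1]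
    linarith [h3, mul_comm (j + 1 : ℝ) (s j)]
  -- harmonic divergence
  set T : ℕ → ℝ := fun M => ∑ j ∈ Finset.range M, 1 / ((j : ℝ) + 1) with hT'
  have hHarm : Tendsto T atTop atTop := Real.tendsto_sum_range_one_div_nat_succ_atTop
  have hHarm2 : Tendsto (fun M => δ * (T M - T M0)) atTop atTop := by
    apply Tendsto.const_mul_atTop hδ
    exact tendsto_atTop_add_const_right _ (-T M0) hHarm
  obtain ⟨M, hMgt, hMge⟩ :=
    ((hHarm2.eventually_gt_atTop L).and (eventually_ge_atTop M0)).exists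
  have e1 : T M - T M0 = ∑ j ∈ Finset.Ico M0 M, 1 / ((j : ℝ) + 1) :=
    (Finset.sum_Ico_eq_sub _ hMge).symm
  have hIco : δ * (T M - T M0) ≤ ∑ j ∈ Finset.Ico M0 M, s j := by
    rw [e1, Finset.mul_sum]
    refine Finset.sum_le_sum fun j hj => ?_
    have h := hlow j (Finset.mem_Ico.mp hj).1
    rw [mul_one_div]
    exact le_of_lt h
  have hsub : ∑ j ∈ Finset.Ico M0 M, s j ≤ ∑ j ∈ Finset.range M, s j := by
    refine Finset.sum_le_sum_of_subset_of_nonneg ?_ fun j _ _ => le_of_lt (hs j)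
    intro j hj
    exact Finset.mem_range.mpr (Finset.mem_Ico.mp hj).2
  have := hsum M
  linarith

/-- **Polterovich–Sodin.** For a `C¹` diffeomorphism `g ≠ id` of a compact interval,
the sup-norm of the derivatives of the iterates `g^m` cannot grow sublinearly, i.e.
`sup_{x} (g^m)'(x) = o(m)` is impossible. -/
theorem polterovich_sodin
    (a b : ℝ) (hab : a < b) (g : ℝ → ℝ)
    (hbij : Set.BijOn g (Set.Icc a b) (Set.Icc a b))
    (hmono : StrictMonoOn g (Set.Icc a b))
    (d : ℝ → ℝ) (hd : ContinuousOn d (Set.Icc a b))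
    (hC1 : ∀ x ∈ Set.Icc a b, 0 < d x ∧ HasDerivWithinAt g (d x) (Set.Icc a b) x)
    (hne : ¬ Set.EqOn g id (Set.Icc a b)) :
    ¬ Tendsto (fun m : ℕ =>
        sSup ((fun x => derivWithin (g^[m]) (Set.Icc a b) x) '' Set.Icc a b) / (m : ℝ))
      atTop (𝓝 0) := by
  classical
  have hx : ∃ x0 ∈ Set.Icc a b, g x0 ≠ x0 := by
    by_contra hcon
    push_neg at hcon
    exact hne fun x hx => hcon x hx
  obtain ⟨x0, hx0, hgx0⟩ := hx
  have hDex := iter_deriv_aux a b g hbij.mapsTo d hd (fun x hx => (hC1 x hx).2)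
  set h : ℝ → ℝ := Function.invFunOn g (Set.Icc a b) with hhdef
  have hinv : ∀ t ∈ Set.Icc a b, h t ∈ Set.Icc a b ∧ g (h t) = t := by
    intro t ht
    have hex : ∃ x ∈ Set.Icc a b, g x = t := hbij.surjOn ht
    exact ⟨Function.invFunOn_mem hex, Function.invFunOn_eq hex⟩
  set y : ℕ → ℝ := fun j => h^[j] x0 with hydef
  have hysucc : ∀ j, y (j + 1) = h (y j) := by
    intro j
    simp only [hydef, Function.iterate_succ', Function.comp_apply]
  have hyIcc : ∀ j, y j ∈ Set.Icc a b := by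
    intro j
    induction j with
    | zero => exact hx0
    | succ j ih => rw [hysucc]; exact (hinv _ ih).1
  have hgy : ∀ j, g (y (j + 1)) = y j := by
    intro j
    rw [hysucc]
    exact (hinv _ (hyIcc j)).2
  have hy0 : y 0 = x0 := rfl
  have hiter_y : ∀ j, g^[j] (y j) = x0 := by
    intro j
    induction j with
    | zero => rfl
    | succ j ih =>
      rw [Function.iterate_succ, Function.comp_apply, hgy j]
      exact ih
  have hiter_y' : ∀ j, g^[j + 1] (y j) = g x0 := by
    intro j
    rw [Function.iterate_succ', Function.comp_apply, hiter_y j]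
  set F : ℕ → ℝ := fun m =>
    sSup ((fun x => derivWithin (g^[m]) (Set.Icc a b) x) '' Set.Icc a b) with hFdef
  rcases lt_or_gt_of_ne hgx0 with hlt | hgt
  · -- g x0 < x0 : y is strictly increasing
    have hstep : ∀ j, y j < y (j + 1) := by
      intro j
      induction j with
      | zero =>
        refine (hmono.lt_iff_lt (hyIcc 0) (hyIcc 1)).mp ?_
        rw [hgy 0, hy0]
        exact hlt
      | succ j ih =>
        refine (hmono.lt_iff_lt (hyIcc (j + 1)) (hyIcc (j + 2))).mp ?_
        rw [hgy j, hgy (j + 1)]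
        exact ih
    set s : ℕ → ℝ := fun j => y (j + 1) - y j with hsdef
    have hs : ∀ j, 0 < s j := fun j => sub_pos.mpr (hstep j)
    have hsum : ∀ M, ∑ j ∈ Finset.range M, s j ≤ b - a := by
      intro M
      rw [hsdef, Finset.sum_range_sub (fun j => y j)]
      have h1 := (hyIcc M).2
      have h2 := (hyIcc 0).1
      linarith
    have hkey : ∀ N, (x0 - g x0) / s N ≤ F (N + 1) := by
      intro N
      obtain ⟨D, hDc, hD⟩ := hDex (N + 1)
      have := sup_deriv_ge a b hab g (N + 1) D hDc hD (y N) (y (N + 1))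
        (hyIcc N) (hyIcc (N + 1)) (hstep N)
      rwa [hiter_y (N + 1), hiter_y' N] at this
    exact no_sublinear (b - a) (x0 - g x0) (by linarith) F s hs hsum hkey
  · -- x0 < g x0 : y is strictly decreasing
    have hstep : ∀ j, y (j + 1) < y j := by
      intro j
      induction j with
      | zero =>
        refine (hmono.lt_iff_lt (hyIcc 1) (hyIcc 0)).mp ?_
        rw [hgy 0, hy0]
        exact hgt
      | succ j ih =>
        refine (hmono.lt_iff_lt (hyIcc (j + 2)) (hyIcc (j + 1))).mp ?_
        rw [hgy j, hgy (j + 1)]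
        exact ih
    set s : ℕ → ℝ := fun j => y j - y (j + 1) with hsdef
    have hs : ∀ j, 0 < s j := fun j => sub_pos.mpr (hstep j)
    have hsum : ∀ M, ∑ j ∈ Finset.range M, s j ≤ b - a := by
      intro M
      rw [hsdef, Finset.sum_range_sub' (fun j => y j)]
      have h1 := (hyIcc M).1
      have h2 := (hyIcc 0).2
      linarith
    have hkey : ∀ N, (g x0 - x0) / s N ≤ F (N + 1) := by
      intro N
      obtain ⟨D, hDc, hD⟩ := hDex (N + 1)
      have := sup_deriv_ge a b hab g (N + 1) D hDc hD (y (N + 1)) (y N)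
        (hyIcc (N + 1)) (hyIcc N) (hstep N)
      rwa [hiter_y (N + 1), hiter_y' N] at this
    exact no_sublinear (b - a) (g x0 - x0) (by linarith) F s hs hsum hkey


end NilpotentCritReg
end
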